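/- (Belief drift under repeated signals, from the proof of Proposition 4) Let α ∈ [0,1), ε ∈ (0, 1/2), and p₀ ∈ (0,1), and define recursively p_{n+1} = α·p_n + (1−α)·( p_n·(1−ε) / ( p_n·(1−ε) + (1−p_n)·ε ) ). Then the sequence (p_n) is strictly increasing and converges to 1. -/

import Mathlib

/-- belief drift under repeated signals: with bias `α ∈ [0,1)`,
signal noise `ε ∈ (0,1/2)`, starting belief `p 0 ∈ (0,1)`, and the PbP-N recursion
`p (n+1) = α·p n + (1−α)·(p n (1−ε) / (p n (1−ε) + (1−p n) ε))`, the sequence `p`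
is strictly increasing and converges to `1`. -/
theorem stmt_15 (α ε : ℝ) (hα : 0 ≤ α ∧ α < 1) (hε : 0 < ε ∧ ε < 1/2)
    (p : ℕ → ℝ) (hp0 : 0 < p 0 ∧ p 0 < 1)
    (hrec : ∀ n, p (n + 1) =
      α * p n + (1 - α) * (p n * (1 - ε) / (p n * (1 - ε) + (1 - p n) * ε))) :
    StrictMono p ∧ Filter.Tendsto p Filter.atTop (nhds 1) := by
  obtain ⟨hα0, hα1⟩ := hα
  obtain ⟨hε0, hε1⟩ := hε
  -- invariance + strict increase at each step
  have key : ∀ n, 0 < p n ∧ p n < 1 := by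
    intro n
    induction n with
    | zero => exact hp0
    | succ n ih =>
      obtain ⟨h0, h1⟩ := ih
      have hd : 0 < p n * (1 - ε) + (1 - p n) * ε := by nlinarith
      have hf0 : 0 < p n * (1 - ε) / (p n * (1 - ε) + (1 - p n) * ε) := by
        apply div_pos; nlinarith; exact hd
      have hf1 : p n * (1 - ε) / (p n * (1 - ε) + (1 - p n) * ε) < 1 := by
        rw [div_lt_one hd]; nlinarith
      rw [hrec n]
      constructor
      · nlinarith
      · nlinarith
  have step : ∀ n, p n < p (n + 1) := by
    intro n
    obtain ⟨h0, h1⟩ := key n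
    have hd : 0 < p n * (1 - ε) + (1 - p n) * ε := by nlinarith
    have hfgt : p n < p n * (1 - ε) / (p n * (1 - ε) + (1 - p n) * ε) := by
      rw [lt_div_iff₀ hd]
      nlinarith [mul_pos (mul_pos h0 (by linarith : (0:ℝ) < 1 - p n))
        (by linarith : (0:ℝ) < 1 - 2*ε)]
    rw [hrec n]; nlinarith
  have hsm : StrictMono p := strictMono_nat_of_lt_succ step
  refine ⟨hsm, ?_⟩
  have hbdd : BddAbove (Set.range p) := ⟨1, by rintro x ⟨n, rfl⟩; exact (key n).2.le⟩
  set L := ⨆ n, p n with hLdef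
  have hL : Filter.Tendsto p Filter.atTop (nhds L) :=
    tendsto_atTop_ciSup hsm.monotone hbdd
  have hLge : p 0 ≤ L := le_ciSup hbdd 0
  have hL0 : 0 < L := lt_of_lt_of_le hp0.1 hLge
  have hLle : L ≤ 1 := ciSup_le fun n => (key n).2.le
  have hdL : L * (1 - ε) + (1 - L) * ε ≠ 0 := by nlinarith
  have hL1 : Filter.Tendsto (fun n => p (n + 1)) Filter.atTop (nhds L) :=
    hL.comp (Filter.tendsto_add_atTop_nat 1)
  have hL2 : Filter.Tendsto (fun n => α * p n + (1 - α) *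
      (p n * (1 - ε) / (p n * (1 - ε) + (1 - p n) * ε))) Filter.atTop
      (nhds (α * L + (1 - α) * (L * (1 - ε) / (L * (1 - ε) + (1 - L) * ε)))) := by
    have hden : Filter.Tendsto (fun n => p n * (1 - ε) + (1 - p n) * ε)
        Filter.atTop (nhds (L * (1 - ε) + (1 - L) * ε)) :=
      (hL.mul_const _).add ((tendsto_const_nhds.sub hL).mul_const _)
    exact (tendsto_const_nhds.mul hL).add
      (tendsto_const_nhds.mul ((hL.mul_const _).div hden hdL))
  have heq : L = α * L + (1 - α) * (L * (1 - ε) / (L * (1 - ε) + (1 - L) * ε)) := by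
    apply tendsto_nhds_unique hL1
    simpa only [hrec] using hL2
  have hLone : L = 1 := by
    rcases lt_or_eq_of_le hLle with hlt | heq1
    · exfalso
      have h := heq
      field_simp at h
      have hd2 : 0 < L * (1 - ε) + ε * (1 - L) := by nlinarith
      have h3 : (1 - α) * (1 - ε) / (L * (1 - ε) + ε * (1 - L)) * (L * (1 - ε) + ε * (1 - L)) = (1 - α) * (1 - ε) := div_mul_cancel₀ _ hd2.ne'
      have h4 : (1 - α) * (L * (1 - ε) + ε * (1 - L)) = (1 - α) * (1 - ε) := by
        rw [← h3, show (1 - α) * (1 - ε) / (L * (1 - ε) + ε * (1 - L)) = 1 - α by linarith]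
      nlinarith [mul_pos (mul_pos (sub_pos.mpr hα1) (by linarith : (0:ℝ) < 1 - 2*ε)) (by linarith : (0:ℝ) < 1 - L), mul_pos (mul_pos (mul_pos (sub_pos.mpr hα1) hL0)
        (by linarith : (0:ℝ) < 1 - 2*ε)) (by linarith : (0:ℝ) < 1 - L)]
    · exact heq1
  rwa [hLone] at hL
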